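/- Let σ > 0 and λ > 0. The solution of the scalar linear ODE dZ_t/dt = ((t(1+λ)-1)/(t²λ + (1-t)²)) Z_t + ((1-t)/(t²λ + (1-t)²))·μ with Z₀ = z₀ satisfies Z₁ = √λ·z₀ + μ. (This is the rectified flow from N(0,1) to N(μ, λ).) -/

import Mathlib

open Set

/-- the solution of
dZ_t/dt = ((t(1+λ)-1)/(t²λ + (1-t)²))Z_t + ((1-t)/(t²λ + (1-t)²))μ with Z₀ = z₀
satisfies Z₁ = √λ z₀ + μ (the rectified flow from N(0,1) to N(μ,λ)). -/
theorem rectified_flow_gaussian_affine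
    (lam mu z₀ : ℝ) (hlam : 0 < lam) (Z : ℝ → ℝ)
    (hZ0 : Z 0 = z₀)
    (hODE : ∀ t ∈ Icc (0:ℝ) 1,
      HasDerivAt Z
        ((t * (1 + lam) - 1) / (t ^ 2 * lam + (1 - t) ^ 2) * Z t +
          (1 - t) / (t ^ 2 * lam + (1 - t) ^ 2) * mu) t) :
    Z 1 = Real.sqrt lam * z₀ + mu := by
  set D : ℝ → ℝ := fun t => (1 + lam) * t ^ 2 - 2 * t + 1 with hDdef
  have hDpos : ∀ t : ℝ, 0 < D t := by
    intro t
    have h1 : D t = lam * t ^ 2 + (1 - t) ^ 2 := by simp [hDdef]; ring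
    rcases eq_or_ne t 0 with h | h
    · rw [h1, h]; norm_num
    · have h2 : 0 < lam * t ^ 2 := by positivity
      nlinarith [sq_nonneg (1 - t)]
  set g : ℝ → ℝ := fun t => (Z t - mu * t) / Real.sqrt (D t) with hgdef
  have hderiv : ∀ t ∈ Icc (0:ℝ) 1, HasDerivAt g 0 t := by
    intro t ht
    have hDp := hDpos t
    have hsq : Real.sqrt (D t) ^ 2 = D t := Real.sq_sqrt hDp.le
    have hsqpos : 0 < Real.sqrt (D t) := Real.sqrt_pos.mpr hDp
    have hDderiv : HasDerivAt D (2 * (1 + lam) * t - 2) t := by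
      have := (((hasDerivAt_pow 2 t).const_mul (1 + lam)).sub
        ((hasDerivAt_id t).const_mul 2)).add_const 1
      convert this using 1
      iterate 3 rfl
      ring
    have hsqrtD : HasDerivAt (fun t => Real.sqrt (D t))
        ((2 * (1 + lam) * t - 2) / (2 * Real.sqrt (D t))) t :=
      hDderiv.sqrt hDp.ne'
    have hDeq : t ^ 2 * lam + (1 - t) ^ 2 = D t := by simp [hDdef]; ring
    have hZ' : HasDerivAt Z
        ((t * (1 + lam) - 1) / D t * Z t + (1 - t) / D t * mu) t := by
      rw [← hDeq]; exact hODE t ht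
    have hnum : HasDerivAt (fun t => Z t - mu * t)
        ((t * (1 + lam) - 1) / D t * Z t + (1 - t) / D t * mu - mu) t := by
      have hmul : HasDerivAt (fun t : ℝ => mu * t) mu t := by
        simpa using (hasDerivAt_id t).const_mul mu
      exact hZ'.sub hmul
    have hdiv := hnum.div hsqrtD hsqpos.ne'
    convert hdiv using 1
    iterate 3 rfl
    rw [eq_comm, div_eq_zero_iff]
    left
    rw [sub_eq_zero]
    have hD0 : D t ≠ 0 := hDp.ne'
    field_simp
    have hmul : Real.sqrt (D t) * Real.sqrt (D t) = D t := Real.mul_self_sqrt hDp.le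
    simp only [hDdef] at hmul ⊢
    linear_combination (2 * ((t * (1 + lam) - 1) * Z t + (1 - t) * mu -
      ((1 + lam) * t ^ 2 - 2 * t + 1) * mu) +
      (Z t - t * (1 + lam) * Z t - t * mu + t ^ 2 * (1 + lam) * mu)) * hmul
  have hcont : ContinuousOn g (Icc 0 1) :=
    fun t ht => ((hderiv t ht).continuousAt).continuousWithinAt
  have hconst := constant_of_has_deriv_right_zero hcont
    (fun t ht => (hderiv t (Ico_subset_Icc_self ht)).hasDerivWithinAt)
    1 (by norm_num)
  have hg0 : g 0 = z₀ := by
    simp [hgdef, hDdef, hZ0]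
  have hg1 : g 1 = (Z 1 - mu) / Real.sqrt lam := by
    simp only [hgdef, hDdef]
    norm_num
    rw [show (1:ℝ) + lam - 2 + 1 = lam by ring]
  rw [hg1, hg0] at hconst
  have hsl : 0 < Real.sqrt lam := Real.sqrt_pos.mpr hlam
  field_simp at hconst
  linarith
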